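/- Fix n ≥ 2. Let X be any set of problem instances and suppose that for each x ∈ X there are reals c^x_{ij} for all 1 ≤ i < j ≤ n, and for each ρ ≥ 0 a value u_ρ(x) ∈ ℝ, with the property that ρ ↦ u_ρ(x) is constant on every subset of [0,∞) on which the set of maximizers argmax_T Σ_{(i,j)∈T} c^x_{ij}·(j−i)^{−ρ}, over all TAD sets T on {1,…,n}, is constant. Then every set of instances pseudo-shattered by U = {u_ρ : ρ ≥ 0} has size N satisfying 2^N ≤ (2n²·4^{n²})·N + 1; in particular pdim(U) = O(n²). -/

import Mathlib

/-- A TAD set on `{1, …, n}`: pairs `(i₁,j₁), …, (i_t,j_t)` with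
`1 ≤ i₁ < j₁ < i₂ < j₂ < … < i_t < j_t ≤ n`. -/
def IsTADSet (n : ℕ) (T : Finset (ℕ × ℕ)) : Prop :=
  (∀ p ∈ T, 1 ≤ p.1 ∧ p.1 < p.2 ∧ p.2 ≤ n) ∧
  (∀ p ∈ T, ∀ q ∈ T, p ≠ q → (p.2 < q.1 ∨ q.2 < p.1))

/-- `h_T(ρ) = Σ_{(i,j) ∈ T} c_{ij}·(j − i)^{−ρ}`. -/
noncomputable def hTAD (c : ℕ → ℕ → ℝ) (T : Finset (ℕ × ℕ)) (ρ : ℝ) : ℝ :=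
  ∑ p ∈ T, c p.1 p.2 * ((p.2 : ℝ) - (p.1 : ℝ)) ^ (-ρ)

/-- An exponential sum with `m+1` nonzero terms and distinct exponents
cannot have `m+1` distinct zeros. -/
lemma expsum_no_zeros : ∀ (m : ℕ) (s : Finset ℕ) (a t : ℕ → ℝ),
    s.card = m + 1 → (∀ i ∈ s, a i ≠ 0) → Set.InjOn t ↑s →
    ¬ ∃ x : Fin (m+1) → ℝ, StrictMono x ∧
      ∀ j, ∑ i ∈ s, a i * Real.exp (t i * x j) = 0 := by
  intro m
  induction m with
  | zero =>
    rintro s a t hcard ha _ ⟨x, _, hx⟩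
    obtain ⟨i, rfl⟩ := Finset.card_eq_one.mp hcard
    have h := hx 0
    simp only [Finset.sum_singleton] at h
    exact ha i (Finset.mem_singleton_self i)
      (by
        rcases mul_eq_zero.mp h with h' | h'
        · exact h'
        · exact absurd h' (Real.exp_ne_zero _))
  | succ m ih =>
    rintro s a t hcard ha hinj ⟨x, hmono, hx⟩
    have hne : s.Nonempty := Finset.card_pos.mp (by omega)
    obtain ⟨i₀, hi₀⟩ := hne
    set g : ℝ → ℝ := fun ρ => ∑ i ∈ s, a i * Real.exp ((t i - t i₀) * ρ) with hg
    have hg0 : ∀ j, g (x j) = 0 := by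
      intro j
      have : g (x j) = (∑ i ∈ s, a i * Real.exp (t i * x j)) * Real.exp (-(t i₀) * x j) := by
        rw [Finset.sum_mul]
        refine Finset.sum_congr rfl fun i _ => ?_
        rw [mul_assoc, ← Real.exp_add]
        ring_nf
      rw [this, hx j, zero_mul]
    set D : ℝ → ℝ := fun ρ => ∑ i ∈ s.erase i₀,
      (a i * (t i - t i₀)) * Real.exp ((t i - t i₀) * ρ) with hD
    have hderiv : ∀ ρ, HasDerivAt g (D ρ) ρ := by
      intro ρ
      have h1 : HasDerivAt g
          (∑ i ∈ s, a i * (Real.exp ((t i - t i₀) * ρ) * (t i - t i₀))) ρ := by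
        apply HasDerivAt.fun_sum
        intro i _
        have h2 : HasDerivAt (fun ρ : ℝ => (t i - t i₀) * ρ) (t i - t i₀) ρ := by
          simpa using (hasDerivAt_id ρ).const_mul (t i - t i₀)
        exact (h2.exp).const_mul (a i)
      convert h1 using 1
      rw [hD, ← Finset.sum_erase_add s _ hi₀]
      simp only [sub_self, mul_zero, zero_mul, mul_comm, add_zero]
      refine (Finset.sum_congr rfl fun i _ => ?_)
      ring
    -- Rolle
    have hy : ∀ j : Fin (m+1), ∃ y ∈ Set.Ioo (x j.castSucc) (x j.succ), D y = 0 := by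
      intro j
      apply exists_hasDerivAt_eq_zero (hmono (Fin.castSucc_lt_succ (i := j)))
      · exact fun r _ => (hderiv r).continuousAt.continuousWithinAt
      · rw [hg0, hg0]
      · exact fun r _ => hderiv r
    choose y hy1 hy2 using hy
    refine ih (s.erase i₀) (fun i => a i * (t i - t i₀)) (fun i => t i - t i₀)
      (by rw [Finset.card_erase_of_mem hi₀, hcard]; omega) ?_ ?_ ⟨y, ?_, hy2⟩
    · intro i hi
      rcases Finset.mem_erase.mp hi with ⟨hne', hmem⟩
      exact mul_ne_zero (ha i hmem) (sub_ne_zero.mpr fun h =>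
        hne' (hinj hmem hi₀ h))
    · intro i hi j hj h
      exact hinj (Finset.mem_of_mem_erase hi) (Finset.mem_of_mem_erase hj)
        (by linarith [sub_left_injective.eq_iff.mp h])
    · intro j j' hjj'
      have h1 : y j < x j.succ := (hy1 j).2
      have h2 : x j'.castSucc < y j' := (hy1 j').1
      have h3 : x j.succ ≤ x j'.castSucc := by
        apply hmono.monotone
        rw [Fin.succ_le_castSucc_iff]
        exact hjj'
      linarith

/-- A set of reals admitting no strictly increasing `(k+1)`-tuple is contained in a
finset of size at most `k`. -/
lemma helper_fin_zeros {S : Set ℝ} {k : ℕ}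
    (h : ¬ ∃ x : Fin (k+1) → ℝ, StrictMono x ∧ ∀ j, x j ∈ S) :
    ∃ Z : Finset ℝ, S ⊆ ↑Z ∧ Z.card ≤ k := by
  have key : ∀ F : Finset ℝ, ↑F ⊆ S → F.card ≤ k := by
    intro F hF
    by_contra hc
    push_neg at hc
    obtain ⟨G, hGF, hGcard⟩ := Finset.exists_subset_card_eq (Nat.succ_le_of_lt hc)
    exact h ⟨fun j => (G.orderIsoOfFin hGcard j : ℝ),
      fun a b hab => Subtype.coe_lt_coe.mpr ((G.orderIsoOfFin hGcard).strictMono hab),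
      fun j => hF (hGF (G.orderIsoOfFin hGcard j).2)⟩
  have hfin : S.Finite := by
    by_contra hinf
    rw [← Set.not_infinite, not_not] at hinf
    obtain ⟨F, hFS, hFcard⟩ := hinf.exists_subset_card_eq (k+1)
    have := key F hFS
    omega
  exact ⟨hfin.toFinset, by simp, by
    have := key hfin.toFinset (by simp)
    exact this⟩

/-- Sign constancy of an exponential sum away from a small finite exceptional set. -/
lemma sign_const_expsum (m : ℕ) (s : Finset ℕ) (a t : ℕ → ℝ)
    (hcard : s.card ≤ m) (hinj : Set.InjOn t ↑s) :
    ∃ Z : Finset ℝ, Z.card ≤ m ∧ ∀ ρ₁ ρ₂ : ℝ, ρ₁ ≤ ρ₂ →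
      (∀ w ∈ Z, w < ρ₁ ∨ ρ₂ < w) →
      (0 ≤ ∑ i ∈ s, a i * Real.exp (t i * ρ₁) ↔
       0 ≤ ∑ i ∈ s, a i * Real.exp (t i * ρ₂)) := by
  classical
  set f : ℝ → ℝ := fun ρ => ∑ i ∈ s, a i * Real.exp (t i * ρ) with hf
  set s' : Finset ℕ := s.filter (fun i => a i ≠ 0) with hs'
  have hfs : ∀ ρ, f ρ = ∑ i ∈ s', a i * Real.exp (t i * ρ) := by
    intro ρ
    rw [hf, hs']
    exact (Finset.sum_filter_of_ne fun i _ h => by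
      intro ha; rw [ha, zero_mul] at h; exact h rfl).symm
  rcases s'.eq_empty_or_nonempty with he | hne
  · refine ⟨∅, by simp, fun ρ₁ ρ₂ _ _ => ?_⟩
    show 0 ≤ f ρ₁ ↔ 0 ≤ f ρ₂
    rw [hfs ρ₁, hfs ρ₂, he]
    simp
  · obtain ⟨k, hk⟩ := Nat.exists_eq_succ_of_ne_zero (Finset.card_ne_zero.mpr hne)
    have hz := expsum_no_zeros k s' a t hk
      (fun i hi => (Finset.mem_filter.mp hi).2)
      (hinj.mono (Finset.coe_subset.mpr (Finset.filter_subset _ _)))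
    have hz2 : ¬ ∃ x : Fin (k+1) → ℝ, StrictMono x ∧ ∀ j, x j ∈ {ρ : ℝ | f ρ = 0} := by
      rintro ⟨x, hx1, hx2⟩
      exact hz ⟨x, hx1, fun j => by rw [← hfs]; exact hx2 j⟩
    obtain ⟨Z, hZsub, hZcard⟩ := helper_fin_zeros hz2
    have hcont : Continuous f := by
      apply continuous_finset_sum
      intro i _
      exact (continuous_const.mul ((continuous_const.mul continuous_id).rexp))
    have hZcard' : Z.card ≤ m := by
      have h5 : s'.card ≤ m := le_trans (Finset.card_filter_le _ _) hcard
      omega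
    refine ⟨Z, hZcard', fun ρ₁ ρ₂ hle hZ => ?_⟩
    show 0 ≤ f ρ₁ ↔ 0 ≤ f ρ₂
    have hnz : ∀ r, ρ₁ ≤ r → r ≤ ρ₂ → f r ≠ 0 := by
      intro r h1 h2 hr0
      rcases hZ r (hZsub hr0) with h | h <;> linarith
    constructor
    · intro h1
      by_contra h2
      push_neg at h2
      have h3 : 0 < f ρ₁ := lt_of_le_of_ne h1 (Ne.symm (hnz ρ₁ le_rfl hle))
      obtain ⟨r, hr, hr0⟩ := intermediate_value_Icc' hle hcont.continuousOn
        (Set.mem_Icc.mpr ⟨le_of_lt h2, le_of_lt h3⟩)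
      exact hnz r hr.1 hr.2 hr0
    · intro h1
      by_contra h2
      push_neg at h2
      have h3 : 0 < f ρ₂ := lt_of_le_of_ne h1 (Ne.symm (hnz ρ₂ hle le_rfl))
      obtain ⟨r, hr, hr0⟩ := intermediate_value_Icc hle hcont.continuousOn
        (Set.mem_Icc.mpr ⟨le_of_lt h2, le_of_lt h3⟩)
      exact hnz r hr.1 hr.2 hr0

/-- if for each instance `x` the utility `ρ ↦ u_ρ(x)` is constant on every
subset of `[0,∞)` on which the set of maximizers of `T ↦ Σ_{(i,j)∈T} c^x_{ij}·(j−i)^{−ρ}`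
(over all TAD sets on `{1,…,n}`) is constant, then every finite set of instances
pseudo-shattered by `U = {u_ρ : ρ ≥ 0}` has size `N` satisfying
`2^N ≤ (2n²·4^{n²})·N + 1`. -/
theorem stmt_19 {X : Type*} (n : ℕ) (hn : 2 ≤ n)
    (c : X → ℕ → ℕ → ℝ) (u : ℝ → X → ℝ)
    (hconst : ∀ x : X, ∀ ρ₁ ∈ Set.Ici (0 : ℝ), ∀ ρ₂ ∈ Set.Ici (0 : ℝ),
      (∀ T : Finset (ℕ × ℕ), IsTADSet n T →
        ((∀ T', IsTADSet n T' → hTAD (c x) T' ρ₁ ≤ hTAD (c x) T ρ₁) ↔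
         (∀ T', IsTADSet n T' → hTAD (c x) T' ρ₂ ≤ hTAD (c x) T ρ₂))) →
      u ρ₁ x = u ρ₂ x)
    (s : Finset X)
    (hshatter : ∃ z : X → ℝ, ∀ b : X → Bool, ∃ ρ ∈ Set.Ici (0 : ℝ),
      ∀ x ∈ s, (z x ≤ u ρ x ↔ b x = true)) :
    2 ^ s.card ≤ (2 * n ^ 2 * 4 ^ (n ^ 2)) * s.card + 1 := by
  classical
  obtain ⟨z, hz⟩ := hshatter
  choose ρ hρ0 hρ using hz
  set P : Finset (ℕ × ℕ) :=
    (Finset.Icc 1 n ×ˢ Finset.Icc 1 n).filter (fun p => p.1 < p.2) with hP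
  have hPcard : P.card ≤ n ^ 2 := by
    calc P.card ≤ ((Finset.Icc 1 n ×ˢ Finset.Icc 1 n)).card := Finset.card_filter_le _ _
    _ = n * n := by
      have hIcc : (Finset.Icc 1 n).card = n := by rw [Nat.card_Icc]; omega
      rw [Finset.card_product, hIcc]
    _ = n ^ 2 := (sq n).symm
  have htadsub : ∀ T, IsTADSet n T → T ⊆ P := by
    intro T hT p hp
    obtain ⟨h1, h2, h3⟩ := hT.1 p hp
    rw [hP, Finset.mem_filter, Finset.mem_product, Finset.mem_Icc, Finset.mem_Icc]
    omega
  -- representation of hTAD as an exponential sum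
  have hrepr : ∀ (cf : ℕ → ℕ → ℝ) (T : Finset (ℕ × ℕ)), T ⊆ P → ∀ r : ℝ,
      hTAD cf T r = ∑ d ∈ Finset.Icc 1 (n-1),
        (∑ p ∈ T.filter (fun p => p.2 - p.1 = d), cf p.1 p.2) *
          Real.exp ((-Real.log d) * r) := by
    intro cf T hT r
    have hmap : ∀ p ∈ T, p.2 - p.1 ∈ Finset.Icc 1 (n-1) := by
      intro p hp
      have h := hT hp
      rw [hP, Finset.mem_filter, Finset.mem_product, Finset.mem_Icc, Finset.mem_Icc] at h
      rw [Finset.mem_Icc]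
      omega
    unfold hTAD
    rw [← Finset.sum_fiberwise_of_maps_to hmap
      (fun p => cf p.1 p.2 * ((p.2:ℝ) - (p.1:ℝ)) ^ (-r))]
    refine Finset.sum_congr rfl fun d hd => ?_
    rw [Finset.sum_mul]
    refine Finset.sum_congr rfl fun p hp => ?_
    rcases Finset.mem_filter.mp hp with ⟨hpT, hpd⟩
    have hmem := hT hpT
    rw [hP, Finset.mem_filter, Finset.mem_product, Finset.mem_Icc, Finset.mem_Icc] at hmem
    have hlt : p.1 < p.2 := hmem.2
    have hcast : ((p.2:ℝ) - (p.1:ℝ)) = ((d : ℕ) : ℝ) := by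
      rw [← hpd, Nat.cast_sub (le_of_lt hlt)]
    have hd1 : 1 ≤ d := (Finset.mem_Icc.mp hd).1
    have hdpos : (0:ℝ) < (d:ℝ) := by exact_mod_cast Nat.lt_of_lt_of_le Nat.zero_lt_one hd1
    rw [hcast, Real.rpow_def_of_pos hdpos]
    have : Real.log d * (-r) = (-Real.log d) * r := by ring
    rw [this]
  -- per-triple exceptional sets
  have hexists : ∀ (x : X) (T T' : Finset (ℕ × ℕ)), ∃ Z : Finset ℝ, Z.card ≤ n ∧
      (T ⊆ P → T' ⊆ P → ∀ r₁ r₂ : ℝ, r₁ ≤ r₂ → (∀ w ∈ Z, w < r₁ ∨ r₂ < w) →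
        (hTAD (c x) T' r₁ ≤ hTAD (c x) T r₁ ↔ hTAD (c x) T' r₂ ≤ hTAD (c x) T r₂)) := by
    intro x T T'
    have hcardIcc : (Finset.Icc 1 (n-1)).card ≤ n := by rw [Nat.card_Icc]; omega
    have hinj : Set.InjOn (fun d : ℕ => -Real.log d) ↑(Finset.Icc 1 (n-1)) := by
      intro d₁ h₁ d₂ h₂ h
      have hd₁ : 1 ≤ d₁ := (Finset.mem_Icc.mp (Finset.mem_coe.mp h₁)).1
      have hd₂ : 1 ≤ d₂ := (Finset.mem_Icc.mp (Finset.mem_coe.mp h₂)).1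
      have hp₁ : (0:ℝ) < d₁ := by exact_mod_cast Nat.lt_of_lt_of_le Nat.zero_lt_one hd₁
      have hp₂ : (0:ℝ) < d₂ := by exact_mod_cast Nat.lt_of_lt_of_le Nat.zero_lt_one hd₂
      have hlog : Real.log d₁ = Real.log d₂ := neg_inj.mp h
      have : (d₁ : ℝ) = d₂ := by
        rw [← Real.exp_log hp₁, ← Real.exp_log hp₂, hlog]
      exact_mod_cast this
    obtain ⟨Z, hZc, hZs⟩ := sign_const_expsum n (Finset.Icc 1 (n-1))
      (fun d => (∑ p ∈ T.filter (fun p => p.2 - p.1 = d), c x p.1 p.2)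
              - (∑ p ∈ T'.filter (fun p => p.2 - p.1 = d), c x p.1 p.2))
      (fun d => -Real.log d) hcardIcc hinj
    refine ⟨Z, hZc, fun hT hT' r₁ r₂ hle hw => ?_⟩
    have key : ∀ rr : ℝ, (hTAD (c x) T' rr ≤ hTAD (c x) T rr ↔
        0 ≤ ∑ d ∈ Finset.Icc 1 (n-1),
          ((∑ p ∈ T.filter (fun p => p.2 - p.1 = d), c x p.1 p.2)
            - (∑ p ∈ T'.filter (fun p => p.2 - p.1 = d), c x p.1 p.2)) *
            Real.exp ((-Real.log d) * rr)) := by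
      intro rr
      rw [hrepr (c x) T hT rr, hrepr (c x) T' hT' rr, ← sub_nonneg,
        ← Finset.sum_sub_distrib]
      simp only [sub_mul]
    rw [key r₁, key r₂]
    exact hZs r₁ r₂ hle hw
  choose Zf hZfcard hZfsign using hexists
  set Zall : Finset ℝ := s.biUnion (fun x => P.powerset.biUnion fun T =>
    P.powerset.biUnion fun T' => Zf x T T') with hZall
  have hZallcard : Zall.card ≤ s.card * (2 ^ P.card * (2 ^ P.card * n)) := by
    refine le_trans Finset.card_biUnion_le ?_
    refine le_trans (Finset.sum_le_sum fun x _ =>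
      le_trans Finset.card_biUnion_le (Finset.sum_le_sum fun T _ =>
        le_trans Finset.card_biUnion_le (Finset.sum_le_sum fun T' _ =>
          hZfcard x T T'))) ?_
    simp only [Finset.sum_const, Finset.card_powerset, smul_eq_mul]
    exact le_rfl
  -- u is constant away from Zall
  have hu : ∀ r₁ r₂ : ℝ, 0 ≤ r₁ → 0 ≤ r₂ → r₁ ≤ r₂ →
      (∀ w ∈ Zall, w < r₁ ∨ r₂ < w) → ∀ x ∈ s, u r₁ x = u r₂ x := by
    intro r₁ r₂ h1 h2 hle hw x hx
    apply hconst x r₁ h1 r₂ h2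
    intro T hT
    have hsign : ∀ T' : Finset (ℕ × ℕ), IsTADSet n T' →
        (hTAD (c x) T' r₁ ≤ hTAD (c x) T r₁ ↔ hTAD (c x) T' r₂ ≤ hTAD (c x) T r₂) := by
      intro T' hT'
      apply hZfsign x T T' (htadsub T hT) (htadsub T' hT') r₁ r₂ hle
      intro w hwmem
      apply hw
      rw [hZall]
      exact Finset.mem_biUnion.mpr ⟨x, hx, Finset.mem_biUnion.mpr
        ⟨T, Finset.mem_powerset.mpr (htadsub T hT), Finset.mem_biUnion.mpr
          ⟨T', Finset.mem_powerset.mpr (htadsub T' hT'), hwmem⟩⟩⟩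
    constructor
    · intro h T' hT'; exact (hsign T' hT').mp (h T' hT')
    · intro h T' hT'; exact (hsign T' hT').mpr (h T' hT')
  -- index of a point relative to Zall
  set idx : ℝ → ℕ := fun r =>
    2 * (Zall.filter (fun w => w < r)).card + (if r ∈ Zall then 1 else 0) with hidx
  have hidx_mem : ∀ r, idx r ∈ Finset.range (2 * Zall.card + 1) := by
    intro r
    rw [Finset.mem_range, hidx]
    by_cases h : r ∈ Zall
    · simp only [h, if_true]
      have hsub : (Zall.filter (fun w => w < r)) ⊆ Zall.erase r := by
        intro w hwm
        rcases Finset.mem_filter.mp hwm with ⟨hw1, hw2⟩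
        exact Finset.mem_erase.mpr ⟨ne_of_lt hw2, hw1⟩
      have h2 := Finset.card_le_card hsub
      have h3 : (Zall.erase r).card = Zall.card - 1 := Finset.card_erase_of_mem h
      have h4 : 1 ≤ Zall.card := Finset.card_pos.mpr ⟨r, h⟩
      omega
    · simp only [h, if_false]
      have h2 := Finset.card_le_card (Finset.filter_subset (fun w => w < r) Zall)
      omega
  have hidx_eq : ∀ r₁ r₂ : ℝ, 0 ≤ r₁ → 0 ≤ r₂ → idx r₁ = idx r₂ →
      ∀ x ∈ s, u r₁ x = u r₂ x := by
    have main : ∀ r₁ r₂ : ℝ, r₁ ≤ r₂ → 0 ≤ r₁ → 0 ≤ r₂ → idx r₁ = idx r₂ →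
        ∀ x ∈ s, u r₁ x = u r₂ x := by
      intro r₁ r₂ hle h1 h2 heq
      rcases eq_or_lt_of_le hle with rfl | hlt
      · intro x _; rfl
      · apply hu r₁ r₂ h1 h2 hle
        have heq' : 2 * (Zall.filter (fun w => w < r₁)).card + (if r₁ ∈ Zall then 1 else 0) =
            2 * (Zall.filter (fun w => w < r₂)).card + (if r₂ ∈ Zall then 1 else 0) := heq
        have hsub : (Zall.filter (fun w => w < r₁)) ⊆ (Zall.filter (fun w => w < r₂)) := by
          intro w hwm
          rcases Finset.mem_filter.mp hwm with ⟨hw1, hw2⟩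
          exact Finset.mem_filter.mpr ⟨hw1, lt_trans hw2 hlt⟩
        have hcards : (Zall.filter (fun w => w < r₁)).card =
            (Zall.filter (fun w => w < r₂)).card ∧
            (if r₁ ∈ Zall then 1 else 0) = (if r₂ ∈ Zall then (1:ℕ) else 0) := by
          by_cases hm1 : r₁ ∈ Zall <;> by_cases hm2 : r₂ ∈ Zall
          · rw [if_pos hm1, if_pos hm2] at heq' ⊢
            omega
          · rw [if_pos hm1, if_neg hm2] at heq' ⊢
            omega
          · rw [if_neg hm1, if_pos hm2] at heq' ⊢
            omega
          · rw [if_neg hm1, if_neg hm2] at heq' ⊢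
            omega
        have hfeq : (Zall.filter (fun w => w < r₁)) = (Zall.filter (fun w => w < r₂)) :=
          Finset.eq_of_subset_of_card_le hsub (le_of_eq hcards.1.symm)
        intro w hwm
        by_contra hcon
        push_neg at hcon
        obtain ⟨hw1, hw2⟩ := hcon
        rcases lt_or_eq_of_le hw2 with hwlt | hweq
        · have : w ∈ Zall.filter (fun w => w < r₂) := Finset.mem_filter.mpr ⟨hwm, hwlt⟩
          rw [← hfeq] at this
          exact absurd (Finset.mem_filter.mp this).2 (not_lt.mpr hw1)
        · -- w = r₂
          have hr₂ : r₂ ∈ Zall := hweq ▸ hwm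
          have hr₁ : r₁ ∈ Zall := by
            by_contra hr₁n
            rw [if_neg hr₁n, if_pos hr₂] at hcards
            omega
          have : r₁ ∈ Zall.filter (fun w => w < r₂) := Finset.mem_filter.mpr ⟨hr₁, hlt⟩
          rw [← hfeq] at this
          exact absurd (Finset.mem_filter.mp this).2 (lt_irrefl r₁)
    intro r₁ r₂ h1 h2 heq x hx
    rcases le_total r₁ r₂ with h | h
    · exact main r₁ r₂ h h1 h2 heq x hx
    · exact (main r₂ r₁ h h2 h1 heq.symm x hx).symm
  -- counting
  have hcount : s.powerset.card ≤ (Finset.range (2 * Zall.card + 1)).card := by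
    apply Finset.card_le_card_of_injOn (fun A => idx (ρ (fun x => decide (x ∈ A))))
    · intro A _
      exact hidx_mem _
    · intro A hA B hB heq
      have hAs : A ⊆ s := Finset.mem_powerset.mp (Finset.mem_coe.mp hA)
      have hBs : B ⊆ s := Finset.mem_powerset.mp (Finset.mem_coe.mp hB)
      have huu := hidx_eq _ _ (hρ0 (fun x => decide (x ∈ A))) (hρ0 (fun x => decide (x ∈ B))) heq
      ext x
      by_cases hxs : x ∈ s
      · have hA' := hρ (fun y => decide (y ∈ A)) x hxs
        have hB' := hρ (fun y => decide (y ∈ B)) x hxs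
        simp only [decide_eq_true_eq] at hA' hB'
        rw [← hA', ← hB', huu x hxs]
      · exact iff_of_false (fun h => hxs (hAs h)) (fun h => hxs (hBs h))
  rw [Finset.card_powerset, Finset.card_range] at hcount
  -- final arithmetic
  have hfinal : 2 * Zall.card + 1 ≤ (2 * n ^ 2 * 4 ^ (n ^ 2)) * s.card + 1 := by
    have h4 : 2 ^ P.card * 2 ^ P.card = 4 ^ P.card := by
      rw [← mul_pow]
      norm_num
    have h5 : (4:ℕ) ^ P.card ≤ 4 ^ (n ^ 2) :=
      Nat.pow_le_pow_right (by norm_num) hPcard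
    have h6 : n ≤ n ^ 2 := by nlinarith
    have h7 : Zall.card ≤ s.card * (2 ^ P.card * (2 ^ P.card * n)) := hZallcard
    have h8 : 2 ^ P.card * (2 ^ P.card * n) = 4 ^ P.card * n := by
      rw [← h4]; ring
    have h9 : 4 ^ P.card * n ≤ 4 ^ (n ^ 2) * n ^ 2 := Nat.mul_le_mul h5 h6
    have h10 : Zall.card ≤ s.card * (4 ^ (n ^ 2) * n ^ 2) := by
      calc Zall.card ≤ s.card * (4 ^ P.card * n) := by rw [← h8]; exact h7
      _ ≤ s.card * (4 ^ (n ^ 2) * n ^ 2) := Nat.mul_le_mul_left _ h9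
    have : 2 * Zall.card ≤ (2 * n ^ 2 * 4 ^ (n ^ 2)) * s.card := by
      calc 2 * Zall.card ≤ 2 * (s.card * (4 ^ (n ^ 2) * n ^ 2)) :=
        Nat.mul_le_mul_left _ h10
      _ = (2 * n ^ 2 * 4 ^ (n ^ 2)) * s.card := by ring
    omega
  exact le_trans hcount hfinal
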